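/- arXiv:2603.24256 — 3 statements merged into one kernel-verified Lean document; each statement's English description precedes it below -/
import Mathlib

section
/- Let n = (n_1, ..., n_ℓ) be a tuple of positive integers with gcd(n_1, ..., n_ℓ) = 1, and let |n| = n_1 + ... + n_ℓ. Then for every positive integer k, the multinomial coefficient (k|n|)! / ∏_i (k n_i)! is divisible by |n|. -/
open Nat

lemma key_mult {α : Type*} [DecidableEq α] (s : Finset α) (f : α → ℕ) (j : α)
    (hj : j ∈ s) (hf : 0 < f j) :
    f j * Nat.multinomial s f =
      (∑ i ∈ s, f i) * Nat.multinomial s (Function.update f j (f j - 1)) := by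
  set g := Function.update f j (f j - 1) with hg
  have hP : 0 < ∏ i ∈ s, (f i)! := Finset.prod_pos fun i _ => Nat.factorial_pos _
  apply Nat.eq_of_mul_eq_mul_left hP
  have hfact : (fun i => (g i)!) = Function.update (fun i => (f i)!) j ((f j - 1)!) := by
    funext i
    by_cases h : i = j
    · subst h; simp [hg]
    · simp [hg, Function.update_of_ne h]
  have hprodf : ∏ i ∈ s, (f i)! = (f j)! * ∏ i ∈ s.erase j, (f i)! :=
    (Finset.mul_prod_erase s _ hj).symm
  have hprodg : ∏ i ∈ s, (g i)! = (f j - 1)! * ∏ i ∈ s.erase j, (f i)! := by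
    calc ∏ i ∈ s, (g i)! = ∏ i ∈ s, Function.update (fun i => (f i)!) j ((f j - 1)!) i := by
          rw [hfact]
      _ = (f j - 1)! * ∏ i ∈ s \ {j}, (f i)! := Finset.prod_update_of_mem hj _ _
      _ = (f j - 1)! * ∏ i ∈ s.erase j, (f i)! := by rw [Finset.sdiff_singleton_eq_erase]
  have hsum : ∑ i ∈ s, g i + 1 = ∑ i ∈ s, f i := by
    have h1 : ∑ i ∈ s, f i = f j + ∑ i ∈ s.erase j, f i := (Finset.add_sum_erase s f hj).symm
    have h2 : ∑ i ∈ s, g i = g j + ∑ i ∈ s.erase j, g i := (Finset.add_sum_erase s g hj).symm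
    have hgj : g j = f j - 1 := Function.update_self _ _ _
    have h3 : ∑ i ∈ s.erase j, g i = ∑ i ∈ s.erase j, f i := by
      apply Finset.sum_congr rfl
      intro i hi
      simp [hg, Function.update_of_ne (Finset.ne_of_mem_erase hi)]
    rw [h2, h3, h1, hgj]
    omega
  have spec_f := Nat.multinomial_spec s f
  have spec_g := Nat.multinomial_spec s g
  calc (∏ i ∈ s, (f i)!) * (f j * Nat.multinomial s f)
      = f j * ((∏ i ∈ s, (f i)!) * Nat.multinomial s f) := by ring
    _ = f j * (∑ i ∈ s, f i)! := by rw [spec_f]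
    _ = f j * (∑ i ∈ s, g i + 1)! := by rw [hsum]
    _ = f j * ((∑ i ∈ s, g i + 1) * (∑ i ∈ s, g i)!) := by rw [Nat.factorial_succ]
    _ = f j * ((∑ i ∈ s, f i) * ((∏ i ∈ s, (g i)!) * Nat.multinomial s g)) := by
        rw [spec_g, hsum]
    _ = (f j * (f j - 1)!) * (∏ i ∈ s.erase j, (f i)!) *
          ((∑ i ∈ s, f i) * Nat.multinomial s g) := by rw [hprodg]; ring
    _ = (f j)! * (∏ i ∈ s.erase j, (f i)!) * ((∑ i ∈ s, f i) * Nat.multinomial s g) := by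
        rw [Nat.mul_factorial_pred hf.ne']
    _ = (∏ i ∈ s, (f i)!) * ((∑ i ∈ s, f i) * Nat.multinomial s g) := by rw [hprodf]

/-- If `n = (n_1, …, n_ℓ)` are positive integers with `gcd(n_1, …, n_ℓ) = 1` and
`|n| = n_1 + ⋯ + n_ℓ`, then for every positive integer `k` the multinomial coefficient
`(k|n|)! / ∏_i (k n_i)!` is divisible by `|n|`. -/
theorem stmt_2 (ℓ : ℕ) (n : Fin ℓ → ℕ) (hpos : ∀ i, 0 < n i)
    (hgcd : Finset.univ.gcd n = 1) (k : ℕ) (hk : 0 < k) :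
    (∑ i, n i) ∣ Nat.multinomial Finset.univ fun i => k * n i := by
  set C := Nat.multinomial Finset.univ fun i => k * n i with hC
  have hdvd : ∀ j, (∑ i, n i) ∣ n j * C := by
    intro j
    have h := key_mult Finset.univ (fun i => k * n i) j (Finset.mem_univ j)
      (Nat.mul_pos hk (hpos j))
    rw [← Finset.mul_sum] at h
    have h' : n j * C = (∑ i, n i) *
        Nat.multinomial Finset.univ (Function.update (fun i => k * n i) j (k * n j - 1)) := by
      apply Nat.eq_of_mul_eq_mul_left hk
      calc k * (n j * C) = (k * n j) * C := by ring
        _ = (k * ∑ i, n i) *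
            Nat.multinomial Finset.univ (Function.update (fun i => k * n i) j (k * n j - 1)) := h
        _ = k * ((∑ i, n i) *
            Nat.multinomial Finset.univ (Function.update (fun i => k * n i) j (k * n j - 1))) := by
            ring
    exact Dvd.intro _ h'.symm
  have : (∑ i, n i) ∣ Finset.univ.gcd fun j => n j * C :=
    Finset.dvd_gcd fun j _ => hdvd j
  rwa [Finset.gcd_mul_right, hgcd, one_mul, normalize_eq] at this
end

section
/- Let R be a commutative ring with Adams operations Ψ_k (ring endomorphisms with Ψ_1 = id, Ψ_k Ψ_m = Ψ_{km}, and Ψ_p(x) ≡ x^p mod p for all primes p). Let n = (n_1,...,n_ℓ) be positive integers with gcd = 1, G ∈ R, and k ≥ 1. Then the element ∑_{k'|k} μ(k/k') · ((k'|n|)! / ∏_i (k' n_i)!) · (Ψ_{k/k'} G)^{k'} of R is divisible by k·|n| in R, i.e., lies in k|n|·R. -/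
open ArithmeticFunction


lemma aux_pow_cong {R : Type*} [CommRing R] (p : ℕ) (hp : p.Prime) {x y : R}
    (h : (p : R) ∣ x - y) (N : ℕ) :
    (p : R) ^ (N.factorization p + 1) ∣ x ^ N - y ^ N := by
  rcases Nat.eq_zero_or_pos N with rfl | hN
  · simp
  have h1 : (p:R) ^ (N.factorization p + 1) ∣ x ^ p ^ N.factorization p - y ^ p ^ N.factorization p := by
    have := dvd_sub_pow_of_dvd_sub h (N.factorization p)
    exact_mod_cast this
  have h2 : x ^ p ^ N.factorization p - y ^ p ^ N.factorization p ∣ x ^ N - y ^ N := by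
    conv_rhs => rw [← Nat.ordProj_mul_ordCompl_eq_self N p, pow_mul, pow_mul]
    exact sub_dvd_pow_sub_pow _ _ _
  exact h1.trans h2

lemma aux_fact_le_choose (p : ℕ) (hp : p.Prime) {K N : ℕ} (hK : 0 < K) (hKN : K ≤ N) :
    N.factorization p ≤ (N.choose K).factorization p + K.factorization p := by
  have hN : 0 < N := lt_of_lt_of_le hK hKN
  have key : N * (N-1).choose (K-1) = N.choose K * K := by
    have h := Nat.add_one_mul_choose_eq (N-1) (K-1)
    simpa [Nat.succ_eq_add_one, Nat.sub_add_cancel hN, Nat.sub_add_cancel hK] using h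
  have h2 : (N * (N-1).choose (K-1)).factorization p = (N.choose K * K).factorization p := by
    rw [key]
  rw [Nat.factorization_mul hN.ne' (Nat.choose_pos (by omega : K - 1 ≤ N - 1)).ne',
      Nat.factorization_mul (Nat.choose_pos hKN).ne' hK.ne'] at h2
  simp only [Finsupp.add_apply] at h2
  omega

open Polynomial in
lemma aux_choose_cong (p : ℕ) (hp : p.Prime) (A B : ℕ) :
    (p:ℤ) ^ (A.factorization p + 1) ∣ ((p*A).choose (p*B) : ℤ) - (A.choose B : ℤ) := by
  have hp0 : 0 < p := hp.pos
  have h0 : ((p:ℤ) : Polynomial ℤ) ∣ (X + 1)^p - expand ℤ p (X + 1) := by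
    have hc : ((p:ℤ) : Polynomial ℤ) = C (p:ℤ) := by simp
    rw [hc, C_dvd_iff_dvd_coeff]
    intro i
    rw [map_add, expand_X, map_one, coeff_sub, coeff_X_add_one_pow, coeff_add, coeff_X_pow,
      coeff_one]
    rcases eq_or_ne i p with rfl | hip
    · simp [hp.pos.ne', Nat.choose_self]
    rcases eq_or_ne i 0 with rfl | hi0
    · simp [hip]
    · simp only [if_neg hip, if_neg hi0, add_zero, sub_zero]
      rcases lt_or_ge i p with h | h
      · exact_mod_cast Int.natCast_dvd_natCast.mpr (hp.dvd_choose_self hi0 h)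
      · have : p < i := lt_of_le_of_ne h (Ne.symm hip)
        simp [Nat.choose_eq_zero_of_lt this]
  have h1 := aux_pow_cong (R := Polynomial ℤ) p hp h0 A
  rw [← pow_mul, ← map_pow (expand ℤ p)] at h1
  have hc : C ((p:ℤ) ^ (A.factorization p + 1)) = (p : Polynomial ℤ) ^ (A.factorization p + 1) := by
    rw [map_pow, map_natCast]
  rw [← hc, C_dvd_iff_dvd_coeff] at h1
  have h2 := h1 (p*B)
  rw [coeff_sub, coeff_X_add_one_pow, coeff_expand hp0, if_pos (dvd_mul_right p B),
    Nat.mul_div_cancel_left B hp0, coeff_X_add_one_pow] at h2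
  exact h2

lemma aux_p_dvd_multinomial {ℓ : ℕ} (p : ℕ) (hp : p.Prime) (n : Fin ℓ → ℕ)
    (hpos : ∀ i, 0 < n i) (j : Fin ℓ) (hj : ¬ p ∣ n j) (e : ℕ) (he : 0 < e) :
    p ^ ((∑ i, n i).factorization p) ∣ Nat.multinomial Finset.univ (fun i => e * n i) := by
  set s := ∑ i, n i with hs
  have hsum : e * n j + ∑ i ∈ Finset.univ.erase j, e * n i = e * s := by
    rw [hs, Finset.mul_sum]
    exact Finset.add_sum_erase _ (fun i => e * n i) (Finset.mem_univ j)
  have hMeq : Nat.multinomial Finset.univ (fun i => e * n i) =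
      (e * s).choose (e * n j) * Nat.multinomial (Finset.univ.erase j) (fun i => e * n i) := by
    conv_lhs => rw [← Finset.insert_erase (Finset.mem_univ j)]
    rw [Nat.multinomial_insert (Finset.notMem_erase j _), hsum]
  rw [hMeq]
  have hjs : n j ≤ s := Finset.single_le_sum (fun i _ => Nat.zero_le (n i)) (Finset.mem_univ j)
  have hs0 : 0 < s := lt_of_lt_of_le (hpos j) hjs
  have hKN : e * n j ≤ e * s := Nat.mul_le_mul_left e hjs
  have hK : 0 < e * n j := Nat.mul_pos he (hpos j)
  have hle := aux_fact_le_choose p hp hK hKN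
  have hEN : (e * s).factorization p = e.factorization p + s.factorization p := by
    rw [Nat.factorization_mul he.ne' hs0.ne']; rfl
  have hEK : (e * n j).factorization p = e.factorization p := by
    rw [Nat.factorization_mul he.ne' (hpos j).ne', Finsupp.add_apply,
      Nat.factorization_eq_zero_of_not_dvd hj, add_zero]
  have hfin : s.factorization p ≤ ((e*s).choose (e*n j)).factorization p := by omega
  exact dvd_mul_of_dvd_left ((pow_dvd_pow p hfin).trans (Nat.ordProj_dvd _ p)) _

lemma aux_multinomial_cong {ℓ : ℕ} (p : ℕ) (hp : p.Prime) (n : Fin ℓ → ℕ)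
    (hpos : ∀ i, 0 < n i) (e : ℕ) (t : Finset (Fin ℓ)) :
    (p:ℤ) ^ ((e * ∑ i ∈ t, n i).factorization p + 1) ∣
      (Nat.multinomial t (fun i => p * e * n i) : ℤ) -
        (Nat.multinomial t (fun i => e * n i) : ℤ) := by
  induction t using Finset.induction_on with
  | empty => simp
  | @insert a t ha ih =>
    rw [Nat.multinomial_insert ha, Nat.multinomial_insert ha]
    set S' := ∑ i ∈ t, n i with hS'
    have hsum : ∑ i ∈ insert a t, n i = n a + S' := Finset.sum_insert ha
    have hsum1 : p * e * n a + ∑ i ∈ t, p * e * n i = p * (e * (n a + S')) := by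
      rw [← Finset.mul_sum]; ring
    have hsum0 : e * n a + ∑ i ∈ t, e * n i = e * (n a + S') := by
      rw [← Finset.mul_sum]; ring
    rw [hsum, hsum1, hsum0]
    push_cast
    set c1 := ((p * (e * (n a + S'))).choose (p * (e * n a)) : ℤ) with hc1
    set c0 := ((e * (n a + S')).choose (e * n a) : ℤ) with hc0
    set m1 := (Nat.multinomial t (fun i => p * e * n i) : ℤ) with hm1
    set m0 := (Nat.multinomial t (fun i => e * n i) : ℤ) with hm0
    have hkey : ((p * (e * (n a + S'))).choose (p * e * n a) : ℤ) * m1 -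
        ((e * (n a + S')).choose (e * n a) : ℤ) * m0
        = (c1 - c0) * m1 + c0 * (m1 - m0) := by
      rw [hc1, hc0, show p * e * n a = p * (e * n a) by ring]; ring
    rw [hkey]
    refine dvd_add (Dvd.dvd.mul_right ?_ _) ?_
    · exact aux_choose_cong p hp (e * (n a + S')) (e * n a)
    · -- second term
      rcases t.eq_empty_or_nonempty with rfl | htne
      · simp [hm1, hm0]
      have hS'0 : 0 < S' := Finset.sum_pos (fun i _ => hpos i) htne
      rcases Nat.eq_zero_or_pos e with rfl | he
      · rw [hm1, hm0]
        simp
      have hKN : e * S' ≤ e * (n a + S') := Nat.mul_le_mul_left e (Nat.le_add_left _ _)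
      have hK : 0 < e * S' := Nat.mul_pos he hS'0
      have hsymm : (e * (n a + S')).choose (e * S') = (e * (n a + S')).choose (e * n a) := by
        have : e * (n a + S') - e * n a = e * S' := by ring_nf; omega
        rw [← this]
        exact Nat.choose_symm (Nat.mul_le_mul_left e (Nat.le_add_right _ _))
      have hle := aux_fact_le_choose p hp hK hKN
      set A := (e * (n a + S')).factorization p with hA
      set B := (e * S').factorization p with hB
      have hdvd1 : (p:ℤ) ^ (A - B) ∣ c0 := by
        rw [hc0, ← hsymm]
        have : p ^ (A - B) ∣ (e * (n a + S')).choose (e * S') := by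
          refine (pow_dvd_pow p ?_).trans (Nat.ordProj_dvd _ p)
          omega
        exact_mod_cast Int.natCast_dvd_natCast.mpr this
      have hdvd2 := ih
      have : (p:ℤ) ^ (A - B) * (p:ℤ) ^ (B + 1) ∣ c0 * (m1 - m0) := mul_dvd_mul hdvd1 hdvd2
      refine dvd_trans (pow_dvd_pow (p:ℤ) ?_) (by rwa [← pow_add] at this)
      omega

lemma aux_natCast_dvd {R : Type*} [CommRing R] (m : ℕ) (hm : m ≠ 0) (x : R)
    (h : ∀ p : ℕ, p.Prime → (p:R) ^ (m.factorization p) ∣ x) : (m:R) ∣ x := by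
  have hm' : (m : R) = ∏ p ∈ m.primeFactors, (p:R) ^ (m.factorization p) := by
    conv_lhs => rw [← Nat.factorization_prod_pow_eq_self hm]
    rw [Finsupp.prod, Nat.support_factorization]
    push_cast
    rfl
  rw [hm']
  refine Finset.prod_dvd_of_coprime ?_ (fun p hp => h p (Nat.prime_of_mem_primeFactors hp))
  intro p hp q hq hpq
  have hp' := Nat.prime_of_mem_primeFactors hp
  have hq' := Nat.prime_of_mem_primeFactors hq
  have hco : Nat.Coprime (p ^ m.factorization p) (q ^ m.factorization q) :=
    Nat.Coprime.pow _ _ ((Nat.coprime_primes hp' hq').mpr hpq)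
  have := (Nat.isCoprime_iff_coprime.mpr hco).map (Int.castRingHom R)
  simpa [Function.onFun] using this


/-- Let `R` be a commutative ring with Adams operations `Ψ_k` (ring endomorphisms with
`Ψ_1 = id`, `Ψ_k Ψ_m = Ψ_{km}`, and `Ψ_p x ≡ x^p mod p` for all primes `p`).  Let
`n = (n_1, …, n_ℓ)` be positive integers with gcd `1`, `G ∈ R` and `k ≥ 1`.  Then
`∑_{k'|k} μ(k/k') ((k'|n|)!/∏_i (k' n_i)!) (Ψ_{k/k'} G)^{k'}` lies in `k|n|·R`. -/
theorem stmt_7 {R : Type*} [CommRing R] (Ψ : ℕ → R →+* R)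
    (h1 : Ψ 1 = RingHom.id R)
    (hcomp : ∀ k m, (Ψ k).comp (Ψ m) = Ψ (k * m))
    (hfrob : ∀ p : ℕ, p.Prime → ∀ x : R, (p : R) ∣ Ψ p x - x ^ p)
    (ℓ : ℕ) (n : Fin ℓ → ℕ) (hpos : ∀ i, 0 < n i) (hgcd : Finset.univ.gcd n = 1)
    (G : R) (k : ℕ) (hk : 1 ≤ k) :
    ((k * ∑ i, n i : ℕ) : R) ∣
      ∑ k' ∈ k.divisors,
        ((moebius (k / k') : ℤ) : R) *
          ((Nat.multinomial Finset.univ fun i => k' * n i : ℕ) : R) *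
          Ψ (k / k') G ^ k' := by
  classical
  have hk0 : k ≠ 0 := by omega
  have hkpos : 0 < k := by omega
  have hl : 0 < ℓ := by
    rcases Nat.eq_zero_or_pos ℓ with h | h
    · exfalso; subst h; simp [Finset.univ_eq_empty] at hgcd
    · exact h
  have : Nonempty (Fin ℓ) := Fin.pos_iff_nonempty.mp hl
  set s := ∑ i, n i with hs
  have hs0 : 0 < s := Finset.sum_pos (fun i _ => hpos i) Finset.univ_nonempty
  have hjex : ∀ p : ℕ, p.Prime → ∃ j, ¬ p ∣ n j := by
    intro p hp
    by_contra hcon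
    push_neg at hcon
    have hd : p ∣ 1 := hgcd ▸ Finset.dvd_gcd (fun i _ => hcon i)
    exact hp.one_lt.ne' (Nat.dvd_one.mp hd)
  set F : ℕ → R := fun t =>
    ((moebius t : ℤ) : R) * ((Nat.multinomial Finset.univ fun i => (k / t) * n i : ℕ) : R) *
      Ψ t G ^ (k / t) with hF
  have hre : (∑ k' ∈ k.divisors, ((moebius (k / k') : ℤ) : R) *
        ((Nat.multinomial Finset.univ fun i => k' * n i : ℕ) : R) * Ψ (k / k') G ^ k')
      = ∑ t ∈ k.divisors, F t := by
    rw [← Nat.sum_div_divisors k F]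
    refine Finset.sum_congr rfl fun d hd => ?_
    obtain ⟨hdvd, -⟩ := Nat.mem_divisors.mp hd
    rw [hF]
    simp only
    rw [Nat.div_div_self hdvd hk0]
  rw [hre]
  refine aux_natCast_dvd _ (Nat.mul_ne_zero hk0 hs0.ne') _ ?_
  intro p hp
  obtain ⟨j, hj⟩ := hjex p hp
  have hfact : (k * s).factorization p = k.factorization p + s.factorization p := by
    rw [Nat.factorization_mul hk0 hs0.ne']; rfl
  rw [hfact]
  set a := k.factorization p with hA
  set b := s.factorization p with hB
  have hMb : ∀ e : ℕ, 0 < e →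
      (p : R) ^ b ∣ ((Nat.multinomial Finset.univ fun i => e * n i : ℕ) : R) := by
    intro e he
    have h2 := Nat.cast_dvd_cast (α := R) (aux_p_dvd_multinomial p hp n hpos j hj e he)
    push_cast at h2
    exact h2
  rcases Nat.eq_zero_or_pos a with ha | ha
  · -- case p ∤ k
    rw [ha, zero_add]
    refine Finset.dvd_sum fun t ht => ?_
    obtain ⟨hdvd, -⟩ := Nat.mem_divisors.mp ht
    have he : 0 < k / t := Nat.div_pos (Nat.le_of_dvd hkpos hdvd) (Nat.pos_of_mem_divisors ht)
    exact Dvd.dvd.mul_right (Dvd.dvd.mul_left (hMb _ he) _) _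
  · -- case p ∣ k
    have hpk : p ∣ k := Nat.dvd_of_factorization_pos (by omega)
    set k₁ := k / p with hk₁
    have hkk : k = p * k₁ := (Nat.mul_div_cancel' hpk).symm
    have hk₁0 : k₁ ≠ 0 := by
      intro h; rw [h, mul_zero] at hkk; exact hk0 hkk
    have hk₁f : k₁.factorization p + 1 = a := by
      have h2 : k.factorization p = (p * k₁).factorization p := by rw [← hkk]
      rw [Nat.factorization_mul hp.pos.ne' hk₁0, Finsupp.add_apply,
        Nat.Prime.factorization_self hp] at h2
      omega
    set A₁ := k₁.divisors.filter (fun t => ¬ p ∣ t) with hA₁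
    have hsplit : ∑ t ∈ k.divisors, F t = ∑ t ∈ A₁, (F t + F (p * t)) := by
      have e1 : ∑ t ∈ k.divisors.filter (fun t => ¬ p ∣ t), F t = ∑ t ∈ A₁, F t := by
        refine Finset.sum_congr ?_ (fun _ _ => rfl)
        ext t
        simp only [hA₁, Finset.mem_filter, Nat.mem_divisors]
        constructor
        · rintro ⟨⟨htk, -⟩, hnp⟩
          refine ⟨⟨?_, hk₁0⟩, hnp⟩
          have hco : Nat.Coprime t p := (Nat.coprime_comm.mp (hp.coprime_iff_not_dvd.mpr hnp))
          rw [hkk] at htk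
          exact hco.dvd_of_dvd_mul_left htk
        · rintro ⟨⟨htk, -⟩, hnp⟩
          exact ⟨⟨hkk ▸ Dvd.dvd.mul_left htk p, hk0⟩, hnp⟩
      have e2 : ∑ t ∈ k.divisors.filter (fun t => p ∣ t), F t = ∑ t ∈ A₁, F (p * t) := by
        have himg : k.divisors.filter (fun t => p ∣ t) = k₁.divisors.image (fun t => p * t) := by
          ext t
          simp only [Finset.mem_filter, Nat.mem_divisors, Finset.mem_image]
          constructor
          · rintro ⟨⟨htk, -⟩, u, rfl⟩
            refine ⟨u, ⟨?_, hk₁0⟩, rfl⟩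
            rw [hkk] at htk
            exact (mul_dvd_mul_iff_left (a := p) (by exact_mod_cast hp.pos.ne')).mp htk
          · rintro ⟨u, ⟨hu, -⟩, rfl⟩
            exact ⟨⟨hkk ▸ mul_dvd_mul_left p hu, hk0⟩, dvd_mul_right p u⟩
        rw [himg, Finset.sum_image (fun x _ y _ hxy => Nat.eq_of_mul_eq_mul_left hp.pos hxy)]
        symm
        refine Finset.sum_subset (Finset.filter_subset _ _) ?_
        intro x hx hnx
        have hpx : p ∣ x := by
          by_contra hc
          exact hnx (Finset.mem_filter.mpr ⟨hx, hc⟩)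
        have hnsq : ¬ Squarefree (p * x) := by
          intro hsf
          exact hp.one_lt.ne' (Nat.isUnit_iff.mp (hsf p (mul_dvd_mul_left p hpx)))
        rw [hF]
        simp only
        rw [moebius_eq_zero_of_not_squarefree hnsq]
        simp
      calc ∑ t ∈ k.divisors, F t
          = ∑ t ∈ k.divisors.filter (fun t => p ∣ t), F t
            + ∑ t ∈ k.divisors.filter (fun t => ¬ p ∣ t), F t :=
            (Finset.sum_filter_add_sum_filter_not _ _ _).symm
        _ = ∑ t ∈ A₁, F (p * t) + ∑ t ∈ A₁, F t := by rw [e1, e2]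
        _ = ∑ t ∈ A₁, (F t + F (p * t)) := by rw [← Finset.sum_add_distrib]; apply Finset.sum_congr rfl; intros; ring
    rw [hsplit]
    refine Finset.dvd_sum fun t ht => ?_
    obtain ⟨htd, hpt⟩ := Finset.mem_filter.mp ht
    obtain ⟨ht1, -⟩ := Nat.mem_divisors.mp htd
    have ht0 : 0 < t := Nat.pos_of_mem_divisors htd
    set e := k₁ / t with hedef
    have hte : k₁ = t * e := (Nat.mul_div_cancel' ht1).symm
    have he0 : 0 < e := by
      rcases Nat.eq_zero_or_pos e with h | h
      · exfalso; rw [h, mul_zero] at hte; exact hk₁0 hte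
      · exact h
    have hkt : k / t = p * e := by
      rw [hkk, hte, Nat.mul_div_assoc p (Dvd.intro e rfl), Nat.mul_div_cancel_left e ht0]
    have hkpt : k / (p * t) = e := by
      rw [hkk, hte, ← mul_assoc, Nat.mul_div_cancel_left e (Nat.mul_pos hp.pos ht0)]
    have hefact : e.factorization p + 1 = a := by
      have h2 : k₁.factorization p = (t * e).factorization p := by rw [← hte]
      rw [Nat.factorization_mul ht0.ne' he0.ne', Finsupp.add_apply,
        Nat.factorization_eq_zero_of_not_dvd hpt] at h2
      omega
    have hμ : (moebius (p * t) : ℤ) = -(moebius t) := by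
      rw [isMultiplicative_moebius.map_mul_of_coprime (hp.coprime_iff_not_dvd.mpr hpt),
        moebius_apply_prime hp]
      ring
    set X := Ψ t G with hX
    set Y := Ψ (p * t) G with hY
    have hYX : Y = Ψ p X := (RingHom.congr_fun (hcomp p t) G).symm
    have hXY : (p : R) ∣ X ^ p - Y := by
      rw [hYX]
      exact dvd_sub_comm.mp (hfrob p hp X)
    have hpowXY : (p : R) ^ a ∣ X ^ (p * e) - Y ^ e := by
      have h2 := aux_pow_cong p hp hXY e
      rw [← pow_mul, hefact] at h2
      exact h2
    have hpair : F t + F (p * t) = ((moebius t : ℤ) : R) *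
        (((Nat.multinomial Finset.univ fun i => p * e * n i : ℕ) : R) * X ^ (p * e)
          - ((Nat.multinomial Finset.univ fun i => e * n i : ℕ) : R) * Y ^ e) := by
      rw [hF]
      simp only [hkt, hkpt, hμ]
      push_cast
      ring
    rw [hpair]
    refine Dvd.dvd.mul_left ?_ _
    have hdec : ((Nat.multinomial Finset.univ fun i => p * e * n i : ℕ) : R) * X ^ (p * e)
        - ((Nat.multinomial Finset.univ fun i => e * n i : ℕ) : R) * Y ^ e
        = (((Nat.multinomial Finset.univ fun i => p * e * n i : ℕ) : ℤ)
            - ((Nat.multinomial Finset.univ fun i => e * n i : ℕ) : ℤ) : ℤ) * X ^ (p * e)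
          + ((Nat.multinomial Finset.univ fun i => e * n i : ℕ) : R) * (X ^ (p * e) - Y ^ e) := by
      push_cast
      ring
    rw [hdec]
    refine dvd_add (Dvd.dvd.mul_right ?_ _) ?_
    · have h2 := aux_multinomial_cong p hp n hpos e Finset.univ
      rw [← hs] at h2
      have hexp : (e * s).factorization p + 1 = a + b := by
        have h3 : (e * s).factorization p = e.factorization p + s.factorization p := by
          rw [Nat.factorization_mul he0.ne' hs0.ne']; rfl
        omega
      rw [hexp] at h2
      have h2R := map_dvd (Int.castRingHom R) h2
      simp only [eq_intCast] at h2R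
      push_cast at h2R ⊢
      exact h2R
    · have h2 := mul_dvd_mul (hMb e he0) hpowXY
      rw [← pow_add, add_comm b a] at h2
      exact h2
end

section
/- Expansion of the plethystic logarithm coefficients: with G = 1 + Σ_{d≥1} G_d Q^d in R⟦Q⟧ and Log(G) = Σ_d Ω_d Q^d, one has for each d ≥ 1: Ω_d = -Σ_{k | d} Σ_{n} (1/(k|n|)) Σ_{k'|k} μ(k/k') · ((k'|n|)!/∏_δ (k' n_δ)!) · ((-1)^{|n|} ∏_δ Ψ_{k/k'}(G_δ^{n_δ}))^{k'}, where the middle sum runs over multiplicity vectors n = (n_δ)_{1≤δ≤d/k}, n_δ ≥ 0, with Σ_δ n_δ · δ = d/k and gcd of the nonzero n_δ equal to 1, and |n| = Σ_δ n_δ. -/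
open PowerSeries ArithmeticFunction

variable {R : Type*} [CommRing R] [Algebra ℚ R]

/-- Formal logarithm of a power series with constant term `1`. -/
noncomputable def logPS (G : PowerSeries R) : PowerSeries R :=
  PowerSeries.mk fun n =>
    ∑ m ∈ Finset.range (n + 1), ((-1 : ℚ) ^ (m + 1) * (m : ℚ)⁻¹) • coeff n ((G - 1) ^ m)

/-- The coefficient `Ω_d` of `Q^d` in the plethystic logarithm
`Log(G) = ∑_{k>0} (μ(k)/k) Ψ_k(log G)`. -/
noncomputable def plethLogCoeff (Ψ : ℕ → R →+* R) (G : PowerSeries R) (d : ℕ) : R :=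
  ∑ k ∈ d.divisors, ((moebius k : ℚ) * (k : ℚ)⁻¹) • Ψ k (coeff (d / k) (logPS G))

/-- Multiplicity vectors of `m`: functions `n : {1,…,m} → ℕ` (indexed by `Fin m`, with
`δ = i + 1`) satisfying `∑_δ n_δ · δ = m` and `gcd(n) = 1`. -/
def mults (m : ℕ) : Finset (Fin m → ℕ) :=
  (Fintype.piFinset fun _ => Finset.range (m + 1)).filter
    fun n => (∑ i : Fin m, (i.1 + 1) * n i) = m ∧ Finset.univ.gcd n = 1

open Finset in
section
open scoped Classical

lemma psi_smul (ψ : R →+* R) (q : ℚ) (x : R) : ψ (q • x) = q • ψ x := by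
  rw [Algebra.smul_def, map_mul, Algebra.smul_def]
  congr 1
  exact RingHom.congr_fun (RingHom.ext_rat (ψ.comp (algebraMap ℚ R)) (algebraMap ℚ R)) q

lemma sum_div_div {M : Type*} [AddCommMonoid M] (d : ℕ) (f : ℕ → ℕ → M) :
    ∑ k ∈ d.divisors, ∑ e ∈ (d / k).divisors, f k e
      = ∑ K ∈ d.divisors, ∑ k ∈ K.divisors, f k (K / k) := by
  rw [Finset.sum_sigma', Finset.sum_sigma']
  refine Finset.sum_nbij' (fun x => ⟨x.1 * x.2, x.1⟩) (fun y => ⟨y.2, y.1 / y.2⟩) ?_ ?_ ?_ ?_ ?_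
  · rintro ⟨k, e⟩ hx
    simp only [Finset.mem_sigma, Nat.mem_divisors] at hx ⊢
    obtain ⟨⟨hk, hd⟩, he, -⟩ := hx
    have hke : k * e ∣ d := (Nat.dvd_div_iff_mul_dvd hk).mp he
    exact ⟨⟨hke, hd⟩, ⟨Dvd.intro e rfl, fun h0 => hd (by simpa [h0] using hke)⟩⟩
  · rintro ⟨K, k⟩ hy
    simp only [Finset.mem_sigma, Nat.mem_divisors] at hy ⊢
    obtain ⟨⟨hK, hd⟩, hk, hK0⟩ := hy
    have hk0 : k ≠ 0 := fun h => hK0 (by simpa [h] using hk)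
    refine ⟨⟨hk.trans hK, hd⟩, ?_, ?_⟩
    · obtain ⟨t, rfl⟩ := hK
      exact ⟨t, by rw [Nat.mul_comm K t, Nat.mul_div_assoc t hk, Nat.mul_comm]⟩
    · exact Nat.ne_of_gt (Nat.div_pos (Nat.le_of_dvd (Nat.pos_of_ne_zero hd) (hk.trans hK)) (Nat.pos_of_ne_zero hk0))
  · rintro ⟨k, e⟩ hx
    simp only [Finset.mem_sigma, Nat.mem_divisors] at hx
    have hk0 : k ≠ 0 := fun h => hx.1.2 (by simpa [h] using hx.1.1)
    simp [Nat.mul_div_cancel_left _ (Nat.pos_of_ne_zero hk0)]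
  · rintro ⟨K, k⟩ hy
    simp only [Finset.mem_sigma, Nat.mem_divisors] at hy
    simp [Nat.mul_div_cancel' hy.2.1]
  · rintro ⟨k, e⟩ hx
    simp only [Finset.mem_sigma, Nat.mem_divisors] at hx
    have hk0 : k ≠ 0 := fun h => hx.1.2 (by simpa [h] using hx.1.1)
    simp [Nat.mul_div_cancel_left _ (Nat.pos_of_ne_zero hk0)]

lemma coeff_pow_eq (G : ℕ → R) (m j : ℕ) :
    coeff m (((PowerSeries.mk fun i => if i = 0 then 1 else G i) - 1) ^ j)
      = ∑ n ∈ Finset.piAntidiag (Finset.Icc 1 m) j,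
          if ∑ δ ∈ Finset.Icc 1 m, δ * n δ = m then
            (Nat.multinomial (Finset.Icc 1 m) n : R) * ∏ δ ∈ Finset.Icc 1 m, G δ ^ n δ
          else 0 := by
  set H : PowerSeries R := (PowerSeries.mk fun i => if i = 0 then 1 else G i) - 1 with hH
  set P : PowerSeries R := ∑ δ ∈ Finset.Icc 1 m, PowerSeries.C (G δ) * X ^ δ with hP
  have hPc : ∀ i : ℕ, coeff i P = if i ∈ Finset.Icc 1 m then G i else 0 := by
    intro i
    rw [hP, map_sum]
    simp only [coeff_C_mul, coeff_X_pow, mul_ite, mul_one, mul_zero]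
    rw [Finset.sum_ite_eq (Finset.Icc 1 m) i (fun δ => G δ)]
  have hdvd : (X : PowerSeries R) ^ (m + 1) ∣ H ^ j - P ^ j := by
    refine dvd_trans ?_ (sub_dvd_pow_sub_pow H P j)
    rw [PowerSeries.X_pow_dvd_iff]
    intro i hi
    have him : i ≤ m := by omega
    rw [map_sub, hPc i, hH]
    simp only [map_sub, coeff_mk, coeff_one, Finset.mem_Icc]
    rcases Nat.eq_zero_or_pos i with rfl | hi0
    · simp
    · have : ¬ (i = 0) := by omega
      simp [this, him, hi0, Nat.one_le_iff_ne_zero.mpr (by omega : i ≠ 0)]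
  have hc : coeff m (H ^ j) = coeff m (P ^ j) := by
    have h0 : coeff m (H ^ j - P ^ j) = 0 := by
      rw [PowerSeries.X_pow_dvd_iff] at hdvd
      exact hdvd m (by omega)
    rw [map_sub, sub_eq_zero] at h0
    exact h0
  rw [hc, hP, Finset.sum_pow_eq_sum_piAntidiag, map_sum]
  refine Finset.sum_congr rfl fun n hn => ?_
  have key : ∏ δ ∈ Finset.Icc 1 m, (PowerSeries.C (G δ) * X ^ δ) ^ n δ
      = PowerSeries.C (∏ δ ∈ Finset.Icc 1 m, G δ ^ n δ) * X ^ (∑ δ ∈ Finset.Icc 1 m, δ * n δ) := by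
    simp only [mul_pow, ← pow_mul]
    rw [Finset.prod_mul_distrib]
    simp only [← map_pow]
    rw [← map_prod, Finset.prod_pow_eq_pow_sum]
  rw [key, ← mul_assoc]
  have : ((Nat.multinomial (Finset.Icc 1 m) n : PowerSeries R)) * PowerSeries.C (∏ δ ∈ Finset.Icc 1 m, G δ ^ n δ)
      = PowerSeries.C ((Nat.multinomial (Finset.Icc 1 m) n : R) * ∏ δ ∈ Finset.Icc 1 m, G δ ^ n δ) := by
    rw [map_mul, map_natCast]
  rw [this, coeff_C_mul, coeff_X_pow]
  simp only [mul_ite, mul_one, mul_zero]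
  congr 1
  simp [eq_comm]

noncomputable def W (m : ℕ) : Finset (ℕ → ℕ) :=
  (Finset.range (m + 1)).biUnion fun j =>
    (Finset.piAntidiag (Finset.Icc 1 m) j).filter fun n => ∑ δ ∈ Finset.Icc 1 m, δ * n δ = m

lemma W_mem {m : ℕ} {n : ℕ → ℕ} :
    n ∈ W m ↔ (∀ δ, n δ ≠ 0 → δ ∈ Finset.Icc 1 m) ∧ (∑ δ ∈ Finset.Icc 1 m, δ * n δ = m) := by
  simp only [W, Finset.mem_biUnion, Finset.mem_filter, Finset.mem_piAntidiag, Finset.mem_range]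
  constructor
  · rintro ⟨j, hj, ⟨rfl, hsupp⟩, hwt⟩
    exact ⟨hsupp, hwt⟩
  · rintro ⟨hsupp, hwt⟩
    refine ⟨∑ δ ∈ Finset.Icc 1 m, n δ, ?_, ⟨rfl, hsupp⟩, hwt⟩
    have : ∑ δ ∈ Finset.Icc 1 m, n δ ≤ ∑ δ ∈ Finset.Icc 1 m, δ * n δ :=
      Finset.sum_le_sum fun δ hδ => by
        simp only [Finset.mem_Icc] at hδ
        exact Nat.le_mul_of_pos_left _ (by omega)
    omega

lemma Wdisj (m : ℕ) : Set.PairwiseDisjoint ↑(Finset.range (m + 1)) fun j =>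
    (Finset.piAntidiag (Finset.Icc 1 m) j).filter fun n => ∑ δ ∈ Finset.Icc 1 m, δ * n δ = m := by
  intro i _ j _ hij
  refine Finset.disjoint_left.mpr fun n hni hnj => hij ?_
  simp only [Finset.mem_filter, Finset.mem_piAntidiag] at hni hnj
  omega

lemma coeff_logPS (G : ℕ → R) (m : ℕ) :
    coeff m (logPS (PowerSeries.mk fun i => if i = 0 then 1 else G i))
      = ∑ n ∈ W m,
          ((-1 : ℚ) ^ ((∑ δ ∈ Finset.Icc 1 m, n δ) + 1) * ((∑ δ ∈ Finset.Icc 1 m, n δ : ℕ) : ℚ)⁻¹) •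
          ((Nat.multinomial (Finset.Icc 1 m) n : R) * ∏ δ ∈ Finset.Icc 1 m, G δ ^ n δ) := by
  rw [logPS, coeff_mk]
  simp only [coeff_pow_eq]
  rw [W, Finset.sum_biUnion (Wdisj m)]
  refine Finset.sum_congr rfl fun j hj => ?_
  rw [Finset.smul_sum]
  simp only [smul_ite, smul_zero]
  rw [← Finset.sum_filter]
  refine Finset.sum_congr rfl fun n hn => ?_
  simp only [Finset.mem_filter, Finset.mem_piAntidiag] at hn
  rw [hn.1.1]

def emb (e m' : ℕ) (n₀ : Fin m' → ℕ) : ℕ → ℕ := fun δ =>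
  if h : 1 ≤ δ ∧ δ - 1 < m' then e * n₀ ⟨δ - 1, h.2⟩ else 0

lemma emb_apply {e m' : ℕ} (n₀ : Fin m' → ℕ) (i : Fin m') : emb e m' n₀ (i.1 + 1) = e * n₀ i := by
  have h : 1 ≤ i.1 + 1 ∧ i.1 + 1 - 1 < m' := ⟨le_refl _ |>.trans (by omega), by simpa using i.2⟩
  rw [emb, dif_pos h]
  have h2 : (⟨i.1 + 1 - 1, h.2⟩ : Fin m') = i := Fin.ext (by simp)
  rw [h2]

lemma emb_prod {M : Type*} [CommMonoid M] {m m' : ℕ} (hm' : m' ≤ m) (e : ℕ) (n₀ : Fin m' → ℕ)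
    (F : ℕ → ℕ → M) (hF : ∀ δ, F δ 0 = 1) :
    ∏ δ ∈ Finset.Icc 1 m, F δ (emb e m' n₀ δ) = ∏ i : Fin m', F (i.1 + 1) (e * n₀ i) := by
  rw [← Finset.prod_subset (Finset.Icc_subset_Icc_right hm' : Finset.Icc 1 m' ⊆ Finset.Icc 1 m)
    (fun δ hδ hδ' => ?_)]
  · refine Finset.prod_bij' (fun δ hδ => (⟨δ - 1, ?_⟩ : Fin m'))
      (fun i _ => i.1 + 1) ?_ ?_ ?_ ?_ ?_
    · simp only [Finset.mem_Icc] at hδ; omega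
    · intro δ hδ; exact Finset.mem_univ _
    · intro i _; simp only [Finset.mem_Icc]; omega
    · intro δ hδ
      simp only [Finset.mem_Icc] at hδ
      show δ - 1 + 1 = δ
      omega
    · intro i _
      exact Fin.ext (by simp)
    · intro δ hδ
      simp only [Finset.mem_Icc] at hδ
      have h : 1 ≤ δ ∧ δ - 1 < m' := by omega
      rw [emb, dif_pos h]
      have hδ1 : δ - 1 + 1 = δ := by omega
      rw [hδ1]
  · simp only [Finset.mem_Icc] at hδ hδ'
    have h : ¬ (1 ≤ δ ∧ δ - 1 < m') := by omega
    rw [emb, dif_neg h, hF]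

lemma emb_sum {M : Type*} [AddCommMonoid M] {m m' : ℕ} (hm' : m' ≤ m) (e : ℕ) (n₀ : Fin m' → ℕ)
    (F : ℕ → ℕ → M) (hF : ∀ δ, F δ 0 = 0) :
    ∑ δ ∈ Finset.Icc 1 m, F δ (emb e m' n₀ δ) = ∑ i : Fin m', F (i.1 + 1) (e * n₀ i) :=
  emb_prod (M := Multiplicative M) hm' e n₀ F hF

lemma emb_gcd {m m' : ℕ} (hm' : m' ≤ m) (e : ℕ) (n₀ : Fin m' → ℕ) :
    Finset.gcd (Finset.Icc 1 m) (emb e m' n₀) = e * Finset.gcd Finset.univ n₀ := by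
  have h1 : Finset.gcd (Finset.Icc 1 m) (emb e m' n₀)
      = Finset.gcd (Finset.Icc 1 m') (emb e m' n₀) := by
    apply Nat.dvd_antisymm
    · exact Finset.dvd_gcd fun δ hδ => Finset.gcd_dvd
        (Finset.Icc_subset_Icc_right hm' hδ)
    · refine Finset.dvd_gcd fun δ hδ => ?_
      by_cases h : 1 ≤ δ ∧ δ - 1 < m'
      · exact Finset.gcd_dvd (by simp only [Finset.mem_Icc]; omega)
      · rw [emb, dif_neg h]; exact dvd_zero _
  have h2 : Finset.gcd (Finset.Icc 1 m') (emb e m' n₀)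
      = Finset.gcd Finset.univ (fun i : Fin m' => e * n₀ i) := by
    apply Nat.dvd_antisymm
    · refine Finset.dvd_gcd fun i _ => ?_
      rw [← emb_apply n₀ i]
      exact Finset.gcd_dvd (by simp only [Finset.mem_Icc]; omega)
    · refine Finset.dvd_gcd fun δ hδ => ?_
      simp only [Finset.mem_Icc] at hδ
      have h : 1 ≤ δ ∧ δ - 1 < m' := by omega
      rw [emb, dif_pos h]
      exact Finset.gcd_dvd (Finset.mem_univ _)
  rw [h1, h2]
  have := Finset.gcd_mul_left (s := (Finset.univ : Finset (Fin m'))) (f := n₀) (a := e)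
  simpa using this
section
variable {R : Type*} [CommRing R] [Algebra ℚ R]

lemma mults_mem {m' : ℕ} {n₀ : Fin m' → ℕ} :
    n₀ ∈ mults m' ↔ (∑ i : Fin m', (i.1 + 1) * n₀ i) = m' ∧ Finset.univ.gcd n₀ = 1 := by
  simp only [mults, Finset.mem_filter, Fintype.mem_piFinset, Finset.mem_range]
  constructor
  · rintro ⟨-, h⟩; exact h
  · rintro ⟨hs, hg⟩
    refine ⟨fun i => ?_, hs, hg⟩
    have h1 : (i.1 + 1) * n₀ i ≤ ∑ j : Fin m', (j.1 + 1) * n₀ j :=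
      Finset.single_le_sum (f := fun j : Fin m' => (j.1 + 1) * n₀ j)
        (fun j _ => Nat.zero_le _) (Finset.mem_univ i)
    rw [hs] at h1
    have h2 : n₀ i ≤ (i.1 + 1) * n₀ i := Nat.le_mul_of_pos_left _ (by omega)
    omega

lemma fiber_sum {M : Type*} [AddCommMonoid M] {m e : ℕ} (hm : 0 < m) (he : e ∣ m) (he0 : 0 < e)
    (f : (ℕ → ℕ) → M) :
    ∑ n ∈ (W m).filter (fun n => Finset.gcd (Finset.Icc 1 m) n = e), f n
      = ∑ n₀ ∈ mults (m / e), f (emb e (m / e) n₀) := by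
  set m' := m / e with hm'def
  have hm'm : m' ≤ m := Nat.div_le_self _ _
  have hm'0 : 0 < m' := Nat.div_pos (Nat.le_of_dvd hm he) he0
  have hem' : e * m' = m := Nat.mul_div_cancel' he
  -- key facts for elements of the fiber
  have main : ∀ n ∈ (W m).filter (fun n => Finset.gcd (Finset.Icc 1 m) n = e),
      emb e m' (fun i : Fin m' => n (i.1 + 1) / e) = n := by
    intro n hn
    rw [Finset.mem_filter, W_mem] at hn
    obtain ⟨⟨hsupp, hwt⟩, hgcd⟩ := hn
    have hdvdall : ∀ δ, e ∣ n δ := by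
      intro δ
      by_cases hδ : δ ∈ Finset.Icc 1 m
      · exact hgcd ▸ Finset.gcd_dvd hδ
      · have : n δ = 0 := by
          by_contra h
          exact hδ (hsupp δ h)
        simp [this]
    have hzero : ∀ δ, m' < δ → n δ = 0 := by
      intro δ hδ
      by_contra h
      have hδm : δ ∈ Finset.Icc 1 m := hsupp δ h
      have hle : δ * n δ ≤ m := hwt ▸ Finset.single_le_sum
        (f := fun δ => δ * n δ) (fun j _ => Nat.zero_le _) hδm
      have hne : e ≤ n δ := Nat.le_of_dvd (Nat.pos_of_ne_zero h) (hdvdall δ)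
      have : δ * e ≤ m := le_trans (Nat.mul_le_mul_left δ hne) hle
      have : δ ≤ m' := (Nat.le_div_iff_mul_le he0).mpr this
      omega
    funext δ
    by_cases h : 1 ≤ δ ∧ δ - 1 < m'
    · rw [emb, dif_pos h]
      have hδ1 : δ - 1 + 1 = δ := by omega
      simp only [hδ1]
      exact Nat.mul_div_cancel' (hdvdall δ)
    · rw [emb, dif_neg h]
      rcases Nat.eq_zero_or_pos δ with rfl | hδ0
      · by_contra hne
        have := hsupp 0 (Ne.symm hne)
        simp at this
      · exact (hzero δ (by omega)).symm
  refine Finset.sum_nbij' (fun n => fun i : Fin m' => n (i.1 + 1) / e)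
    (fun n₀ => emb e m' n₀) ?_ ?_ ?_ ?_ ?_
  · -- forward membership
    intro n hn
    have hemb := main n hn
    rw [Finset.mem_filter, W_mem] at hn
    obtain ⟨⟨hsupp, hwt⟩, hgcd⟩ := hn
    rw [mults_mem]
    constructor
    · -- sum condition
      have h1 : ∑ δ ∈ Finset.Icc 1 m, δ * (emb e m' (fun i : Fin m' => n (i.1 + 1) / e)) δ = m := by
        rw [hemb]; exact hwt
      rw [emb_sum hm'm e _ (fun δ x => δ * x) (fun δ => Nat.mul_zero δ)] at h1
      have h2 : ∑ i : Fin m', (i.1 + 1) * (e * (n (i.1 + 1) / e))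
          = e * ∑ i : Fin m', (i.1 + 1) * (n (i.1 + 1) / e) := by
        rw [Finset.mul_sum]
        exact Finset.sum_congr rfl fun i _ => by ring
      rw [h2] at h1
      exact Nat.eq_of_mul_eq_mul_left he0 (by rw [h1, hem'])
    · -- gcd condition
      have h1 : Finset.gcd (Finset.Icc 1 m) (emb e m' (fun i : Fin m' => n (i.1 + 1) / e)) = e := by
        rw [hemb]; exact hgcd
      rw [emb_gcd hm'm] at h1
      exact Nat.eq_of_mul_eq_mul_left he0 (by rw [Nat.mul_one, h1])
  · -- backward membership
    intro n₀ hn₀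
    rw [mults_mem] at hn₀
    obtain ⟨hs, hg⟩ := hn₀
    rw [Finset.mem_filter, W_mem]
    refine ⟨⟨?_, ?_⟩, ?_⟩
    · intro δ hδ
      simp only [emb] at hδ
      by_cases h : 1 ≤ δ ∧ δ - 1 < m'
      · simp only [Finset.mem_Icc]; omega
      · rw [dif_neg h] at hδ; exact absurd rfl hδ
    · rw [emb_sum hm'm e _ (fun δ x => δ * x) (fun δ => Nat.mul_zero δ)]
      calc ∑ i : Fin m', (i.1 + 1) * (e * n₀ i)
          = e * ∑ i : Fin m', (i.1 + 1) * n₀ i := by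
            rw [Finset.mul_sum]; exact Finset.sum_congr rfl fun i _ => by ring
        _ = m := by rw [hs, hem']
    · rw [emb_gcd hm'm, hg, Nat.mul_one]
  · -- left inverse
    exact main
  · -- right inverse
    intro n₀ hn₀
    funext i
    show emb e m' n₀ (i.1 + 1) / e = n₀ i
    rw [emb_apply]
    exact Nat.mul_div_cancel_left _ he0
  · intro n hn
    rw [main n hn]
end
section
variable {R : Type*} [CommRing R] [Algebra ℚ R]

lemma term_eq (u : R) (μv : ℤ) (Mc k e S : ℕ) :
    ((μv : ℚ) * (k : ℚ)⁻¹) • (((-1 : ℚ) ^ (e * S + 1) * ((e * S : ℕ) : ℚ)⁻¹) • ((Mc : R) * u ^ e))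
      = - ((((k * e : ℕ) : ℚ) * ((S : ℕ) : ℚ))⁻¹ •
          (((μv : ℤ) : R) * (Mc : R) * ((-1 : R) ^ S * u) ^ e)) := by
  have hmu : ((μv : ℤ) : R) = algebraMap ℚ R ((μv : ℤ) : ℚ) := (map_intCast _ μv).symm
  have hsgn : ((-1 : R) ^ (S * e)) = algebraMap ℚ R ((-1 : ℚ) ^ (S * e)) := by
    rw [map_pow, map_neg, map_one]
  have hring : ((μv : ℤ) : R) * (Mc : R) * ((-1 : R) ^ S * u) ^ e
      = algebraMap ℚ R ((μv : ℤ) : ℚ) * (algebraMap ℚ R ((-1 : ℚ) ^ (S * e)) * ((Mc : R) * u ^ e)) := by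
    rw [← hmu, ← hsgn, mul_pow, ← pow_mul]
    ring
  rw [hring, ← Algebra.smul_def, ← Algebra.smul_def, smul_smul, smul_smul, smul_smul, ← neg_smul]
  congr 1
  push_cast
  have h2 : ((-1 : ℚ)) ^ (S * e) = (-1 : ℚ) ^ (e * S) := by rw [mul_comm]
  rw [h2, pow_succ]
  ring

lemma coeff_logPS2 (G : ℕ → R) (m : ℕ) (hm : 0 < m) :
    coeff m (logPS (PowerSeries.mk fun i => if i = 0 then 1 else G i))
      = ∑ e ∈ m.divisors, ∑ n₀ ∈ mults (m / e),
          ((-1 : ℚ) ^ (e * (∑ i, n₀ i) + 1) * ((e * (∑ i, n₀ i) : ℕ) : ℚ)⁻¹) •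
          ((Nat.multinomial Finset.univ (fun i => e * n₀ i) : R) *
            ∏ i : Fin (m / e), G (i.1 + 1) ^ (e * n₀ i)) := by
  have hmaps : ∀ n ∈ W m, Finset.gcd (Finset.Icc 1 m) n ∈ m.divisors := by
    intro n hn
    rw [W_mem] at hn
    rw [Nat.mem_divisors]
    refine ⟨?_, by omega⟩
    have h := Finset.dvd_sum (f := fun δ => δ * n δ) (s := Finset.Icc 1 m)
      (fun δ hδ => Dvd.dvd.mul_left (Finset.gcd_dvd hδ) δ)
    rwa [hn.2] at h
  rw [coeff_logPS, ← Finset.sum_fiberwise_of_maps_to hmaps]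
  refine Finset.sum_congr rfl fun e he => ?_
  obtain ⟨hed, hm0⟩ := Nat.mem_divisors.mp he
  have he0 : 0 < e := Nat.pos_of_mem_divisors he
  rw [fiber_sum hm hed he0]
  refine Finset.sum_congr rfl fun n₀ hn₀ => ?_
  have hmle : m / e ≤ m := Nat.div_le_self _ _
  have hsz : ∑ δ ∈ Finset.Icc 1 m, emb e (m / e) n₀ δ = e * ∑ i, n₀ i := by
    rw [emb_sum hmle e n₀ (fun _ x => x) (fun _ => rfl), Finset.mul_sum]
  have hprodfac : ∏ δ ∈ Finset.Icc 1 m, Nat.factorial (emb e (m / e) n₀ δ)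
      = ∏ i : Fin (m / e), Nat.factorial (e * n₀ i) :=
    emb_prod hmle e n₀ (fun _ x => Nat.factorial x) (fun _ => rfl)
  have hmult : Nat.multinomial (Finset.Icc 1 m) (emb e (m / e) n₀)
      = Nat.multinomial Finset.univ (fun i : Fin (m / e) => e * n₀ i) := by
    rw [Nat.multinomial, Nat.multinomial, hsz, hprodfac, Finset.mul_sum]
  have hprodG : ∏ δ ∈ Finset.Icc 1 m, G δ ^ emb e (m / e) n₀ δ
      = ∏ i : Fin (m / e), G (i.1 + 1) ^ (e * n₀ i) :=
    emb_prod hmle e n₀ (fun δ x => G δ ^ x) (fun δ => pow_zero _)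
  rw [hsz, hmult, hprodG]
end

end

/-- Expansion of the plethystic logarithm coefficients: with `G = 1 + ∑_{d≥1} G_d Q^d` and
`Log(G) = ∑_d Ω_d Q^d`, for each `d ≥ 1`:
`Ω_d = -∑_{k|d} ∑_n (1/(k|n|)) ∑_{k'|k} μ(k/k') ((k'|n|)!/∏_δ (k' n_δ)!) ·
  ((-1)^{|n|} ∏_δ Ψ_{k/k'}(G_δ^{n_δ}))^{k'}`,
the middle sum being over multiplicity vectors `n` of `d/k` with `gcd(n) = 1`. -/
theorem stmt_19 (Ψ : ℕ → R →+* R)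
    (h1 : Ψ 1 = RingHom.id R)
    (hcomp : ∀ k m, (Ψ k).comp (Ψ m) = Ψ (k * m))
    (G : ℕ → R) (d : ℕ) (hd : 0 < d) :
    plethLogCoeff Ψ (PowerSeries.mk fun m => if m = 0 then 1 else G m) d
      = - ∑ k ∈ d.divisors, ∑ n ∈ mults (d / k),
          ((k : ℚ) * ((∑ i, n i : ℕ) : ℚ))⁻¹ •
            ∑ k' ∈ k.divisors,
              ((moebius (k / k') : ℤ) : R) *
                ((Nat.multinomial Finset.univ fun i => k' * n i : ℕ) : R) *
                ((-1 : R) ^ (∑ i, n i) * ∏ i : Fin (d / k), Ψ (k / k') (G (i.1 + 1) ^ n i)) ^ k' := by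
  have hd0 : d ≠ 0 := hd.ne'
  have lhs_eq : plethLogCoeff Ψ (PowerSeries.mk fun m => if m = 0 then 1 else G m) d
      = ∑ K ∈ d.divisors, ∑ k ∈ K.divisors, ∑ n ∈ mults (d / K),
          ((moebius k : ℚ) * (k : ℚ)⁻¹) •
            (((-1 : ℚ) ^ ((K / k) * (∑ i, n i) + 1) * (((K / k) * (∑ i, n i) : ℕ) : ℚ)⁻¹) •
              ((Nat.multinomial Finset.univ (fun i => (K / k) * n i) : R) *
                ∏ i : Fin (d / K), Ψ k (G (i.1 + 1) ^ ((K / k) * n i)))) := by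
    rw [plethLogCoeff]
    have step1 : ∀ k ∈ d.divisors,
        ((moebius k : ℚ) * (k : ℚ)⁻¹) •
            Ψ k (coeff (d / k) (logPS (PowerSeries.mk fun i => if i = 0 then 1 else G i)))
        = ∑ e ∈ (d / k).divisors, ∑ n₀ ∈ mults (d / k / e),
            ((moebius k : ℚ) * (k : ℚ)⁻¹) •
              (((-1 : ℚ) ^ (e * (∑ i, n₀ i) + 1) * ((e * (∑ i, n₀ i) : ℕ) : ℚ)⁻¹) •
                ((Nat.multinomial Finset.univ (fun i => e * n₀ i) : R) *
                  ∏ i : Fin (d / k / e), Ψ k (G (i.1 + 1) ^ (e * n₀ i)))) := by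
      intro k hk
      obtain ⟨hkd, -⟩ := Nat.mem_divisors.mp hk
      have hm : 0 < d / k := Nat.div_pos (Nat.le_of_dvd hd hkd) (Nat.pos_of_mem_divisors hk)
      rw [coeff_logPS2 G (d / k) hm, map_sum, Finset.smul_sum]
      refine Finset.sum_congr rfl fun e he => ?_
      rw [map_sum, Finset.smul_sum]
      refine Finset.sum_congr rfl fun n₀ hn₀ => ?_
      rw [psi_smul, map_mul, map_natCast, map_prod]
    rw [Finset.sum_congr rfl step1, sum_div_div d]
    refine Finset.sum_congr rfl fun K hK => Finset.sum_congr rfl fun k hk => ?_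
    obtain ⟨hkK, hK0⟩ := Nat.mem_divisors.mp hk
    rw [show d / k / (K / k) = d / K by
      rw [Nat.div_div_eq_div_mul, Nat.mul_div_cancel' hkK]]
  rw [lhs_eq]
  have rhs_eq : ∀ K ∈ d.divisors,
      (∑ k ∈ K.divisors, ∑ n ∈ mults (d / K),
          ((moebius k : ℚ) * (k : ℚ)⁻¹) •
            (((-1 : ℚ) ^ ((K / k) * (∑ i, n i) + 1) * (((K / k) * (∑ i, n i) : ℕ) : ℚ)⁻¹) •
              ((Nat.multinomial Finset.univ (fun i => (K / k) * n i) : R) *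
                ∏ i : Fin (d / K), Ψ k (G (i.1 + 1) ^ ((K / k) * n i)))))
      = - ∑ n ∈ mults (d / K),
          ((K : ℚ) * ((∑ i, n i : ℕ) : ℚ))⁻¹ •
            ∑ k' ∈ K.divisors,
              ((moebius (K / k') : ℤ) : R) *
                ((Nat.multinomial Finset.univ fun i => k' * n i : ℕ) : R) *
                ((-1 : R) ^ (∑ i, n i) * ∏ i : Fin (d / K), Ψ (K / k') (G (i.1 + 1) ^ n i)) ^ k' := by
    intro K hK
    obtain ⟨hKd, -⟩ := Nat.mem_divisors.mp hK
    have hK0 : K ≠ 0 := Nat.pos_of_mem_divisors hK |>.ne'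
    -- reindex the inner divisor sum on the right
    have inner_eq : ∀ n : Fin (d / K) → ℕ,
        (∑ k' ∈ K.divisors,
            ((moebius (K / k') : ℤ) : R) *
              ((Nat.multinomial Finset.univ fun i => k' * n i : ℕ) : R) *
              ((-1 : R) ^ (∑ i, n i) * ∏ i : Fin (d / K), Ψ (K / k') (G (i.1 + 1) ^ n i)) ^ k')
        = ∑ k ∈ K.divisors,
            ((moebius k : ℤ) : R) *
              ((Nat.multinomial Finset.univ fun i => (K / k) * n i : ℕ) : R) *
              ((-1 : R) ^ (∑ i, n i) * ∏ i : Fin (d / K), Ψ k (G (i.1 + 1) ^ n i)) ^ (K / k) := by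
      intro n
      rw [← Nat.sum_div_divisors K (fun k =>
        ((moebius k : ℤ) : R) *
          ((Nat.multinomial Finset.univ fun i => (K / k) * n i : ℕ) : R) *
          ((-1 : R) ^ (∑ i, n i) * ∏ i : Fin (d / K), Ψ k (G (i.1 + 1) ^ n i)) ^ (K / k))]
      refine Finset.sum_congr rfl fun k' hk' => ?_
      obtain ⟨hk'K, -⟩ := Nat.mem_divisors.mp hk'
      rw [Nat.div_div_self hk'K hK0]
    refine Eq.symm ?_
    have hsum : ∀ n : Fin (d / K) → ℕ, ∀ S : ℚ,
        S • (∑ k' ∈ K.divisors,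
            ((moebius (K / k') : ℤ) : R) *
              ((Nat.multinomial Finset.univ fun i => k' * n i : ℕ) : R) *
              ((-1 : R) ^ (∑ i, n i) * ∏ i : Fin (d / K), Ψ (K / k') (G (i.1 + 1) ^ n i)) ^ k')
        = ∑ k ∈ K.divisors, S •
            (((moebius k : ℤ) : R) *
              ((Nat.multinomial Finset.univ fun i => (K / k) * n i : ℕ) : R) *
              ((-1 : R) ^ (∑ i, n i) * ∏ i : Fin (d / K), Ψ k (G (i.1 + 1) ^ n i)) ^ (K / k)) := by
      intro n S
      rw [inner_eq n, Finset.smul_sum]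
    calc - ∑ n ∈ mults (d / K),
          ((K : ℚ) * ((∑ i, n i : ℕ) : ℚ))⁻¹ •
            ∑ k' ∈ K.divisors,
              ((moebius (K / k') : ℤ) : R) *
                ((Nat.multinomial Finset.univ fun i => k' * n i : ℕ) : R) *
                ((-1 : R) ^ (∑ i, n i) * ∏ i : Fin (d / K), Ψ (K / k') (G (i.1 + 1) ^ n i)) ^ k'
        = - ∑ n ∈ mults (d / K), ∑ k ∈ K.divisors,
            ((K : ℚ) * ((∑ i, n i : ℕ) : ℚ))⁻¹ •
              (((moebius k : ℤ) : R) *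
                ((Nat.multinomial Finset.univ fun i => (K / k) * n i : ℕ) : R) *
                ((-1 : R) ^ (∑ i, n i) * ∏ i : Fin (d / K), Ψ k (G (i.1 + 1) ^ n i)) ^ (K / k)) := by
          rw [Finset.sum_congr rfl fun n _ => hsum n _]
      _ = ∑ k ∈ K.divisors, ∑ n ∈ mults (d / K),
            - (((K : ℚ) * ((∑ i, n i : ℕ) : ℚ))⁻¹ •
              (((moebius k : ℤ) : R) *
                ((Nat.multinomial Finset.univ fun i => (K / k) * n i : ℕ) : R) *
                ((-1 : R) ^ (∑ i, n i) * ∏ i : Fin (d / K), Ψ k (G (i.1 + 1) ^ n i)) ^ (K / k))) := by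
          rw [Finset.sum_comm, ← Finset.sum_neg_distrib]
          exact Finset.sum_congr rfl fun k _ => by rw [← Finset.sum_neg_distrib]
      _ = _ := by
          refine Finset.sum_congr rfl fun k hk => Finset.sum_congr rfl fun n hn => ?_
          obtain ⟨hkK, -⟩ := Nat.mem_divisors.mp hk
          have hke : k * (K / k) = K := Nat.mul_div_cancel' hkK
          have hu : ∏ i : Fin (d / K), Ψ k (G (i.1 + 1) ^ ((K / k) * n i))
              = (∏ i : Fin (d / K), Ψ k (G (i.1 + 1) ^ n i)) ^ (K / k) := by
            rw [← Finset.prod_pow]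
            exact Finset.prod_congr rfl fun i _ => by rw [← map_pow, ← pow_mul, mul_comm]
          rw [hu, term_eq _ (moebius k) _ k (K / k) _, hke]
  calc ∑ K ∈ d.divisors, ∑ k ∈ K.divisors, ∑ n ∈ mults (d / K),
          ((moebius k : ℚ) * (k : ℚ)⁻¹) •
            (((-1 : ℚ) ^ ((K / k) * (∑ i, n i) + 1) * (((K / k) * (∑ i, n i) : ℕ) : ℚ)⁻¹) •
              ((Nat.multinomial Finset.univ (fun i => (K / k) * n i) : R) *
                ∏ i : Fin (d / K), Ψ k (G (i.1 + 1) ^ ((K / k) * n i))))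
      = ∑ K ∈ d.divisors, - ∑ n ∈ mults (d / K),
          ((K : ℚ) * ((∑ i, n i : ℕ) : ℚ))⁻¹ •
            ∑ k' ∈ K.divisors,
              ((moebius (K / k') : ℤ) : R) *
                ((Nat.multinomial Finset.univ fun i => k' * n i : ℕ) : R) *
                ((-1 : R) ^ (∑ i, n i) * ∏ i : Fin (d / K), Ψ (K / k') (G (i.1 + 1) ^ n i)) ^ k' :=
        Finset.sum_congr rfl rhs_eq
    _ = _ := by rw [Finset.sum_neg_distrib]
end
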